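/- Dual representation of the first-order mean–semideviation: let (X, ℬ, m) be a probability space, κ ∈ [0,1], and φ : X → ℝ integrable. Then ∫ φ dm + κ ∫ (φ − ∫ φ dm)₊ dm = sup { ∫ φ · (1 + h − ∫ h dm) dm : h measurable, 0 ≤ h ≤ κ }, and the supremum is attained (for example at h = κ·1_{{φ > ∫ φ dm}}). In particular, every measure μ with dμ/dm = 1 + h − ∫ h dm, 0 ≤ h ≤ κ, is a probability measure, and the mean–semideviation equals the maximum of ∫ φ dμ over this set of probability measures. -/

import Mathlib

open MeasureTheory Filter Topology

section Aux

variable {X : Type*} [MeasurableSpace X] (m : Measure X) [IsProbabilityMeasure m]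

private lemma integrable_of_bdd {h : X → ℝ} {κ : ℝ} (hm : Measurable h)
    (hb : ∀ x, 0 ≤ h x ∧ h x ≤ κ) : Integrable h m := by
  refine Integrable.mono' (integrable_const κ) hm.aestronglyMeasurable ?_
  filter_upwards with x
  rw [Real.norm_eq_abs, abs_of_nonneg (hb x).1]
  exact (hb x).2

private lemma integral_expand {φ h : X → ℝ} {κ : ℝ} (hφ : Integrable φ m)
    (hm : Measurable h) (hb : ∀ x, 0 ≤ h x ∧ h x ≤ κ) :
    ∫ x, φ x * (1 + h x - ∫ y, h y ∂m) ∂m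
      = (∫ x, φ x ∂m) + ∫ x, (φ x - ∫ y, φ y ∂m) * h x ∂m := by
  have hhi : Integrable h m := integrable_of_bdd m hm hb
  have hφh : Integrable (fun x => φ x * h x) m := by
    have := Integrable.bdd_mul (f := h) (g := φ) (c := |κ|) hφ hm.aestronglyMeasurable
      (Eventually.of_forall fun x => by
        rw [Real.norm_eq_abs]
        rcases le_or_gt κ 0 with h0 | h0
        · rw [abs_of_nonneg (hb x).1, abs_of_nonpos h0]
          nlinarith [(hb x).1, (hb x).2]
        · rw [abs_of_nonneg (hb x).1, abs_of_pos h0]; exact (hb x).2)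
    simpa [mul_comm] using this
  set c := ∫ y, h y ∂m with hc
  have e1 : ∀ x, φ x * (1 + h x - c) = φ x + (φ x * h x - c * φ x) := by
    intro x; ring
  rw [show (fun x => φ x * (1 + h x - c)) = fun x => φ x + (φ x * h x - c * φ x) from
    funext e1]
  have hg : Integrable (fun x => φ x * h x - c * φ x) m := hφh.sub (hφ.const_mul c)
  rw [integral_add hφ hg, integral_sub hφh (hφ.const_mul c), integral_const_mul]
  have e2 : ∀ x, (φ x - ∫ y, φ y ∂m) * h x = φ x * h x - (∫ y, φ y ∂m) * h x := by
    intro x; ring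
  rw [show (fun x => (φ x - ∫ y, φ y ∂m) * h x)
      = fun x => φ x * h x - (∫ y, φ y ∂m) * h x from funext e2,
    integral_sub hφh (hhi.const_mul _), integral_const_mul]
  ring

end Aux

/-- **Dual representation of the first-order mean–semideviation.**
For a probability space `(X, ℬ, m)`, `κ ∈ [0,1]`, and integrable `φ`, the value
`∫ φ dm + κ ∫ (φ − ∫ φ dm)₀ dm` is the attained supremum of
`∫ φ · (1 + h − ∫ h dm) dm` over measurable `h` with `0 ≤ h ≤ κ`; moreover every density
`1 + h − ∫ h dm` with `0 ≤ h ≤ κ` defines a probability measure. -/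
theorem mean_semideviation_dual_representation
    {X : Type*} [MeasurableSpace X] (m : Measure X) [IsProbabilityMeasure m]
    (κ : ℝ) (hκ0 : 0 ≤ κ) (hκ1 : κ ≤ 1)
    (φ : X → ℝ) (hφm : Measurable φ) (hφ : Integrable φ m) :
    IsGreatest
      {r : ℝ | ∃ h : X → ℝ, Measurable h ∧ (∀ x, 0 ≤ h x ∧ h x ≤ κ) ∧
        r = ∫ x, φ x * (1 + h x - ∫ y, h y ∂m) ∂m}
      (∫ x, φ x ∂m + κ * ∫ x, max (φ x - ∫ y, φ y ∂m) 0 ∂m) ∧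
    ∀ h : X → ℝ, Measurable h → (∀ x, 0 ≤ h x ∧ h x ≤ κ) →
      IsProbabilityMeasure
        (m.withDensity fun x => ENNReal.ofReal (1 + h x - ∫ y, h y ∂m)) := by
  set Iφ := ∫ y, φ y ∂m with hIφ
  -- integrability of the positive part
  have hmax : Integrable (fun x => max (φ x - Iφ) 0) m :=
    ((hφ.sub (integrable_const Iφ)).pos_part)
  constructor
  · constructor
    · -- membership: take h₀ = κ · 1_{φ > Iφ}
      refine ⟨fun x => if Iφ < φ x then κ else 0, ?_, ?_, ?_⟩
      · exact Measurable.ite (measurableSet_lt measurable_const hφm)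
          measurable_const measurable_const
      · intro x; by_cases hx : Iφ < φ x <;> simp [hx, hκ0]
      · rw [integral_expand m (κ := κ) hφ
          (Measurable.ite (measurableSet_lt measurable_const hφm)
            measurable_const measurable_const)
          (fun x => by by_cases hx : Iφ < φ x <;> simp [hx, hκ0])]
        congr 1
        rw [← integral_const_mul]
        refine integral_congr_ae (Eventually.of_forall fun x => ?_)
        show κ * max (φ x - Iφ) 0 = (φ x - ∫ y, φ y ∂m) * (if Iφ < φ x then κ else 0)
        rw [← hIφ]
        by_cases hx : Iφ < φ x
        · rw [if_pos hx, max_eq_left (by linarith)]; ring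
        · rw [if_neg hx, max_eq_right (by push_neg at hx; linarith)]
          ring
    · -- upper bound
      rintro r ⟨h, hm, hb, rfl⟩
      rw [integral_expand m (κ := κ) hφ hm hb]
      gcongr
      rw [← integral_const_mul]
      have hint1 : Integrable (fun x => (φ x - Iφ) * h x) m := by
        refine Integrable.bdd_mul (f := h) (hφ.sub (integrable_const Iφ))
          hm.aestronglyMeasurable (c := κ) (Eventually.of_forall fun x => by
            rw [Real.norm_eq_abs, abs_of_nonneg (hb x).1]; exact (hb x).2)
          |>.congr (Eventually.of_forall fun x => by simp [Pi.sub_apply]; ring)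
      refine integral_mono hint1 (hmax.const_mul κ) fun x => ?_
      rcases le_or_gt (φ x - Iφ) 0 with hx | hx
      · have : (φ x - Iφ) * h x ≤ 0 := mul_nonpos_of_nonpos_of_nonneg hx (hb x).1
        have : 0 ≤ κ * max (φ x - Iφ) 0 := by positivity
        linarith
      · rw [max_eq_left hx.le]
        have := (hb x).2
        nlinarith
  · -- probability measure part
    intro h hm hb
    have hhi : Integrable h m := integrable_of_bdd m hm hb
    set c := ∫ y, h y ∂m with hc
    have hcκ : c ≤ κ := by
      calc c ≤ ∫ _, κ ∂m := integral_mono hhi (integrable_const κ) fun x => (hb x).2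
      _ = κ := by simp
    have hnn : ∀ x, 0 ≤ 1 + h x - c := fun x => by
      have := (hb x).1; linarith
    have hint : Integrable (fun x => 1 + h x - c) m :=
      ((integrable_const (1 : ℝ)).add hhi).sub (integrable_const c)
    constructor
    rw [withDensity_apply _ MeasurableSet.univ, setLIntegral_univ,
      ← ofReal_integral_eq_lintegral_ofReal hint (Eventually.of_forall hnn)]
    have : ∫ x, (1 + h x - c) ∂m = 1 := by
      have h1 : Integrable (fun x => 1 + h x) m := (integrable_const (1:ℝ)).add hhi
      rw [integral_sub h1 (integrable_const c),
        integral_add (integrable_const (1 : ℝ)) hhi]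
      simp [← hc]
    rw [this]; simp
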